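/- If A ⊆ ℕ is an essential CR-set and l ∈ ℕ, then the set {(a,b) ∈ ℕ × ℕ : a + kb ∈ A for all k ∈ {0,1,…,l}} is an essential CR-set in (ℕ × ℕ, +). -/

import Mathlib

/-- Sum of `f` over a nonempty finite set `α` in a commutative semigroup. -/
def sgSum {ι S : Type*} [LinearOrder ι] [AddCommSemigroup S]
    (α : Finset ι) (f : ι → S) (h : α.Nonempty) : S :=
  ((α.erase (α.min' h)).sort (· ≤ ·)).foldl (fun x i => x + f i) (f (α.min' h))

/-- `A` is a J-set: for every finite set of sequences there are `a` and a
nonempty finite `H ⊆ ℕ` with `a + ∑_{n ∈ H} f n ∈ A` for each `f`. -/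
def JSet {S : Type*} [AddCommSemigroup S] (A : Set S) : Prop :=
  ∀ F : Finset (ℕ → S), ∃ (a : S) (H : Finset ℕ) (hH : H.Nonempty),
    ∀ f ∈ F, a + sgSum H f hH ∈ A

/-- `A` is thick: every finite set can be shifted into `A`. -/
def Thick {S : Type*} [AddCommSemigroup S] (A : Set S) : Prop :=
  ∀ E : Finset S, ∃ x : S, ∀ e ∈ E, e + x ∈ A

/-- `A` is syndetic: finitely many shifts `-t + A` cover `S`. -/
def Syndetic {S : Type*} [AddCommSemigroup S] (A : Set S) : Prop :=
  ∃ F : Finset S, ∀ x : S, ∃ t ∈ F, t + x ∈ A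

/-- `A` is piecewise syndetic: finitely many shifts `-t + A` form a thick set. -/
def PiecewiseSyndetic {S : Type*} [AddCommSemigroup S] (A : Set S) : Prop :=
  ∃ F : Finset S, Thick {x : S | ∃ t ∈ F, t + x ∈ A}

/-- `A` is a combinatorially rich (CR) set. -/
def CRSet {S : Type*} [AddCommSemigroup S] (A : Set S) : Prop :=
  ∀ n : ℕ, ∃ r : ℕ, ∀ M : Fin r → Fin n → S,
    ∃ (α : Finset (Fin r)) (hα : α.Nonempty) (s : S),
      ∀ j : Fin n, s + sgSum α (fun i => M i j) hα ∈ A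

/-- `iterAdd a b k = a + b + ⋯ + b` (`k` copies of `b`). -/
def iterAdd {S : Type*} [AddSemigroup S] (a b : S) : ℕ → S
  | 0 => a
  | k + 1 => iterAdd a b k + b

/-- The extension of the addition of `S` to the ultrafilters `βS`:
`A ∈ p + q` iff `{x : -x + A ∈ q} ∈ p`. -/
noncomputable def uadd {S : Type*} [AddSemigroup S] (p q : Ultrafilter S) :
    Ultrafilter S :=
  p.bind fun x => q.map (x + ·)

/-- `A` is an essential CR-set: `A` belongs to some idempotent ultrafilter all
of whose members are CR-sets. -/
def EssentialCRSet {S : Type*} [AddCommSemigroup S] (A : Set S) : Prop :=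
  ∃ p : Ultrafilter S, uadd p p = p ∧ (∀ B : Set S, B ∈ p → CRSet B) ∧ A ∈ p


/-- Auxiliary: the CR property phrased with `Finset.sum` over arbitrary finite
index types. -/
def CRF {S : Type*} [AddCommMonoid S] (A : Set S) : Prop :=
  ∀ (J : Type) (_ : Fintype J), ∃ r : ℕ, ∀ M : Fin r → J → S,
    ∃ α : Finset (Fin r), α.Nonempty ∧ ∃ s : S, ∀ j : J, s + ∑ i ∈ α, M i j ∈ A

section lemmas
variable {S : Type*} [AddCommMonoid S] {A B B₁ B₂ : Set S}

theorem list_foldl_add {ι : Type*} (f : ι → S) :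
    ∀ (l : List ι) (b : S), l.foldl (fun x i => x + f i) b = b + (l.map f).sum := by
  intro l
  induction l with
  | nil => simp
  | cons a l ih => intro b; simp [ih, add_assoc]

theorem sgSum_eq_sum {ι : Type*} [LinearOrder ι] (α : Finset ι) (f : ι → S)
    (h : α.Nonempty) : sgSum α f h = ∑ i ∈ α, f i := by
  unfold sgSum
  rw [list_foldl_add]
  rw [List.Perm.sum_eq ((Finset.sort_perm_toList _ _).map f)]
  rw [Finset.sum_map_toList]
  exact Finset.add_sum_erase _ f (α.min'_mem h)

theorem crSet_iff_crf : CRSet A ↔ CRF A := by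
  constructor
  · intro h J fJ
    haveI := fJ
    obtain ⟨r, hr⟩ := h (Fintype.card J)
    refine ⟨r, fun M => ?_⟩
    obtain ⟨α, hα, s, hs⟩ := hr fun i jf => M i ((Fintype.equivFin J).symm jf)
    refine ⟨α, hα, s, fun j => ?_⟩
    have := hs (Fintype.equivFin J j)
    rwa [sgSum_eq_sum, Equiv.symm_apply_apply] at this
  · intro h n
    obtain ⟨r, hr⟩ := h (Fin n) inferInstance
    refine ⟨r, fun M => ?_⟩
    obtain ⟨α, hα, s, hs⟩ := hr M
    exact ⟨α, hα, s, fun j => by rw [sgSum_eq_sum]; exact hs j⟩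

theorem CRF.mono (h : CRF A) (hAB : A ⊆ B) : CRF B := by
  intro J fJ
  obtain ⟨r, hr⟩ := h J fJ
  refine ⟨r, fun M => ?_⟩
  obtain ⟨α, hα, s, hs⟩ := hr M
  exact ⟨α, hα, s, fun j => hAB (hs j)⟩

theorem CRF.shift {x : S} (h : CRF {y | x + y ∈ B}) : CRF B := by
  intro J fJ
  obtain ⟨r, hr⟩ := h J fJ
  refine ⟨r, fun M => ?_⟩
  obtain ⟨α, hα, s, hs⟩ := hr M
  exact ⟨α, hα, x + s, fun j => by rw [add_assoc]; exact hs j⟩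

theorem crf_of_uadd (r : Ultrafilter S) (h : CRF {x | {y | x + y ∈ B} ∈ r}) : CRF B := by
  intro J fJ
  haveI := fJ
  obtain ⟨r', hr'⟩ := h J fJ
  refine ⟨r', fun M => ?_⟩
  obtain ⟨α, hα, s, hs⟩ := hr' M
  have hmem : (⋂ j : J, {y | (s + ∑ i ∈ α, M i j) + y ∈ B}) ∈ r :=
    Filter.iInter_mem.2 fun j => hs j
  obtain ⟨y, hy⟩ := Ultrafilter.nonempty_of_mem hmem
  refine ⟨α, hα, s + y, fun j => ?_⟩
  have := Set.mem_iInter.1 hy j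
  simpa [add_assoc, add_comm y, add_left_comm y] using this

theorem not_crf_empty : ¬ CRF (∅ : Set S) := by
  intro h
  obtain ⟨r, hr⟩ := h PUnit inferInstance
  obtain ⟨α, hα, s, hs⟩ := hr fun _ _ => 0
  exact hs PUnit.unit

end lemmas

section ultra
variable {S T : Type*} [AddSemigroup S] [AddSemigroup T]

theorem mem_uadd {p q : Ultrafilter S} {B : Set S} :
    B ∈ uadd p q ↔ {x | {y | x + y ∈ B} ∈ q} ∈ p := Iff.rfl

attribute [local instance] Ultrafilter.add Ultrafilter.addSemigroup

theorem uadd_eq_add (p q : Ultrafilter S) : uadd p q = p + q := by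
  refine Ultrafilter.coe_inj.mp (Filter.ext fun s => ?_)
  have h2 : s ∈ (↑(p + q) : Filter S) ↔ ∀ᶠ m in ↑p, ∀ᶠ m' in ↑q, m + m' ∈ s :=
    Ultrafilter.eventually_add p q (· ∈ s)
  rw [h2]
  rfl

theorem map_uadd (f : S → T) (hf : ∀ a b, f (a + b) = f a + f b)
    (p q : Ultrafilter S) : (uadd p q).map f = uadd (p.map f) (q.map f) := by
  refine Ultrafilter.coe_inj.mp (Filter.ext fun B => ?_)
  show B ∈ (uadd p q).map f ↔ B ∈ uadd (p.map f) (q.map f)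
  rw [Ultrafilter.mem_map, mem_uadd, mem_uadd]
  have hset : ∀ x : S, ({y | x + y ∈ f ⁻¹' B} : Set S) = f ⁻¹' {b | f x + b ∈ B} := by
    intro x; ext y; simp [hf]
  simp only [Ultrafilter.mem_map, hset, Set.preimage_setOf_eq]

end ultra

theorem CRF.partition {S : Type*} [AddCommMonoid S] {B₁ B₂ : Set S}
    (h : CRF (B₁ ∪ B₂)) (h₁ : ¬ CRF B₁) : CRF B₂ := by
  classical
  rw [CRF] at h₁
  push_neg at h₁
  obtain ⟨J₁, fJ₁, hbad⟩ := h₁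
  haveI := fJ₁
  have hJ₁ : Nonempty J₁ := by
    obtain ⟨M₀, hM₀⟩ := hbad 1
    obtain ⟨j₀, -⟩ := hM₀ {0} ⟨0, Finset.mem_singleton_self 0⟩ 0
    exact ⟨j₀⟩
  intro J fJ
  haveI := fJ
  obtain ⟨ι, ιfin, hHJ⟩ :=
    Combinatorics.Line.exists_mono_in_high_dimension J₁ (J → Bool)
  haveI := ιfin
  obtain ⟨r, hr⟩ := h (J × (ι → J₁)) inferInstance
  refine ⟨r, fun M => ?_⟩
  set R := Fintype.card (ι × Fin r) with hR
  set e : ι × Fin r ≃ Fin R := Fintype.equivFin _ with he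
  obtain ⟨P, hP⟩ := hbad R
  set N : Fin r → J × (ι → J₁) → S :=
    fun i jω => M i jω.1 + ∑ t : ι, P (e (t, i)) (jω.2 t) with hN
  obtain ⟨α, hα, s, hs⟩ := hr N
  set Cc : (ι → J₁) → (J → Bool) := fun ω j =>
    decide (s + ∑ i ∈ α, N i (j, ω) ∈ B₂) with hCc
  obtain ⟨line, c, hc⟩ := hHJ Cc
  set Vs : Finset ι := Finset.univ.filter (fun t => line.idxFun t = none) with hVs
  have hVsne : Vs.Nonempty := by
    obtain ⟨t, ht⟩ := line.proper
    exact ⟨t, by simp [hVs, ht]⟩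
  set j₀ : J₁ := Classical.arbitrary J₁ with hj₀
  set F : S := ∑ t ∈ Finset.univ.filter (fun t => ¬ line.idxFun t = none),
      ∑ i ∈ α, P (e (t, i)) ((line.idxFun t).getD j₀) with hF
  set β : Finset (Fin R) := (Vs ×ˢ α).image e with hβ
  have hβne : β.Nonempty := (hVsne.product hα).image e
  have hQ : ∀ x : J₁, ∑ t ∈ Vs, ∑ i ∈ α, P (e (t, i)) x = ∑ i' ∈ β, P i' x := by
    intro x
    rw [hβ, Finset.sum_image (fun a _ b _ hab => e.injective hab), Finset.sum_product]
  have keyid : ∀ (j : J) (x : J₁),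
      s + ∑ i ∈ α, N i (j, line x) =
        (s + (F + ∑ i' ∈ β, P i' x)) + ∑ i ∈ α, M i j := by
    intro j x
    have h1 : ∑ i ∈ α, N i (j, line x)
        = ∑ i ∈ α, M i j + ∑ t : ι, ∑ i ∈ α, P (e (t, i)) (line x t) := by
      rw [hN]
      simp only [Finset.sum_add_distrib]
      rw [Finset.sum_comm]
    have h2 : ∑ t : ι, ∑ i ∈ α, P (e (t, i)) (line x t)
        = F + ∑ i' ∈ β, P i' x := by
      rw [← Finset.sum_filter_add_sum_filter_not Finset.univ
        (fun t => line.idxFun t = none) (fun t => ∑ i ∈ α, P (e (t, i)) (line x t))]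
      rw [add_comm]
      congr 1
      · rw [hF]
        refine Finset.sum_congr rfl fun t ht => ?_
        refine Finset.sum_congr rfl fun i _ => ?_
        simp only [Finset.mem_filter] at ht
        obtain ⟨a, ha⟩ := Option.ne_none_iff_exists'.1 ht.2
        rw [Combinatorics.Line.coe_apply, ha]
        rfl
      · rw [← hQ x]
        refine Finset.sum_congr rfl fun t ht => ?_
        refine Finset.sum_congr rfl fun i _ => ?_
        simp only [hVs, Finset.mem_filter] at ht
        rw [Combinatorics.Line.coe_apply, ht.2]
        rfl
    rw [h1, h2]
    abel
  have hcall : ∀ j : J, c j = true := by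
    intro j
    by_contra hcj
    have hcjf : c j = false := by revert hcj; cases c j <;> simp
    have hfalse : ∀ x : J₁, (s + ∑ i ∈ α, N i (j, line x)) ∉ B₂ := by
      intro x hmem
      have hx : Cc (line x) j = false := by rw [hc x, hcjf]
      rw [hCc] at hx
      simp only [decide_eq_false_iff_not] at hx
      exact hx hmem
    obtain ⟨x₀, hx₀⟩ := hP β hβne (s + F + ∑ i ∈ α, M i j)
    have hin : s + ∑ i ∈ α, N i (j, line x₀) ∈ B₁ ∪ B₂ := hs (j, line x₀)
    rcases hin with hin | hin
    · apply hx₀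
      rw [keyid j x₀] at hin
      convert hin using 1
      abel
    · exact hfalse x₀ hin
  refine ⟨α, hα, s + (F + ∑ i' ∈ β, P i' j₀), fun j => ?_⟩
  have hmem : s + ∑ i ∈ α, N i (j, line j₀) ∈ B₂ := by
    have hx : Cc (line j₀) j = true := by rw [hc j₀, hcall j]
    rw [hCc] at hx
    simpa using of_decide_eq_true hx
  rw [keyid j j₀] at hmem
  exact hmem


theorem not_crf_sUnion {S : Type*} [AddCommMonoid S] {T : Set (Set S)} (hT : T.Finite)
    (h : ∀ B ∈ T, ¬ CRF B) : ¬ CRF (⋃₀ T) := by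
  revert h
  refine Set.Finite.induction_on
    (motive := fun T _ => (∀ B ∈ T, ¬ CRF B) → ¬ CRF (⋃₀ T)) T hT ?_ ?_
  · intro _
    rw [Set.sUnion_empty]
    exact not_crf_empty
  · intro B T hB hTfin ih h hcr
    rw [Set.sUnion_insert] at hcr
    exact ih (fun C hC => h C (Set.mem_insert_of_mem _ hC))
      (hcr.partition (h B (Set.mem_insert _ _)))

theorem crf_AP {D : Set ℕ} (hD : CRF D) (l : ℕ) :
    CRF {pab : ℕ × ℕ | ∀ k, k ≤ l → pab.1 + k * pab.2 ∈ D} := by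
  intro J fJ
  haveI := fJ
  obtain ⟨r, hr⟩ := hD (J × Fin (l+1)) inferInstance
  refine ⟨r, fun M => ?_⟩
  obtain ⟨α, hα, s, hs⟩ := hr fun i jk => (M i jk.1).1 + (jk.2 : ℕ) * (M i jk.1).2
  refine ⟨α, hα, (s, 0), fun j => ?_⟩
  intro k hk
  have h := hs (j, ⟨k, Nat.lt_succ_of_le hk⟩)
  simp only [Finset.sum_add_distrib, ← Finset.mul_sum] at h
  have h1 : ((s, (0:ℕ)) + ∑ i ∈ α, M i j).1 = s + ∑ i ∈ α, (M i j).1 := by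
    simp [Prod.fst_sum]
  have h2 : ((s, (0:ℕ)) + ∑ i ∈ α, M i j).2 = ∑ i ∈ α, (M i j).2 := by
    simp [Prod.snd_sum]
  show ((s, (0:ℕ)) + ∑ i ∈ α, M i j).1 + k * ((s, (0:ℕ)) + ∑ i ∈ α, M i j).2 ∈ D
  rw [h1, h2]
  have : s + ∑ i ∈ α, (M i j).1 + k * ∑ i ∈ α, (M i j).2
      = s + (∑ i ∈ α, (M i j).1 + k * ∑ i ∈ α, (M i j).2) := by ring
  rw [this]
  exact h


namespace APmain

def Tm (k : ℕ) : ℕ × ℕ → ℕ := fun x => x.1 + k * x.2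

theorem Tm_hom (k : ℕ) (a b : ℕ × ℕ) : Tm k (a + b) = Tm k a + Tm k b := by
  simp only [Tm, Prod.fst_add, Prod.snd_add]; ring

attribute [local instance] Ultrafilter.add Ultrafilter.addSemigroup

theorem main (A : Set ℕ) (hA : EssentialCRSet A)
    (l : ℕ) :
    EssentialCRSet {p : ℕ × ℕ | ∀ k : ℕ, k ≤ l → p.1 + k * p.2 ∈ A} := by
  classical
  obtain ⟨p, hpp, hpcr, hpA⟩ := hA
  have hpcrf : ∀ B : Set ℕ, B ∈ p → CRF B := fun B hB => crSet_iff_crf.mp (hpcr B hB)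
  set G : Set (Set (ℕ × ℕ)) :=
    {u | ∃ k ≤ l, ∃ A' ∈ p, u = Tm k ⁻¹' A'} ∪ {u | ∃ B : Set (ℕ × ℕ), ¬ CRF B ∧ u = Bᶜ}
    with hGdef
  have hne : (Filter.generate G).NeBot := by
    rw [Filter.generate_neBot_iff]
    intro t hts htfin
    have key : ∀ u : Set (ℕ × ℕ), ∃ (A' : Set ℕ) (B : Set (ℕ × ℕ)), A' ∈ p ∧ ¬ CRF B ∧
        (u ∈ t → {pab : ℕ × ℕ | ∀ k, k ≤ l → pab.1 + k * pab.2 ∈ A'} ∩ Bᶜ ⊆ u) := by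
      intro u
      by_cases hu : u ∈ t
      · rcases hts hu with h | h
        · obtain ⟨k, hk, A', hA', rfl⟩ := h
          exact ⟨A', ∅, hA', not_crf_empty, fun _ x hx => hx.1 k hk⟩
        · obtain ⟨B, hB, rfl⟩ := h
          exact ⟨Set.univ, B, Filter.univ_mem, hB, fun _ x hx => hx.2⟩
      · exact ⟨Set.univ, ∅, Filter.univ_mem, not_crf_empty, fun h => absurd h hu⟩
    choose fA fB hfA hfB hsub using key
    have hD : (A ∩ ⋂ u ∈ t, fA u) ∈ p :=
      Filter.inter_mem hpA ((Filter.biInter_mem htfin).2 fun u _ => hfA u)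
    set D := A ∩ ⋂ u ∈ t, fA u with hDdef
    set Y := {pab : ℕ × ℕ | ∀ k, k ≤ l → pab.1 + k * pab.2 ∈ D} with hYdef
    have hYcr : CRF Y := crf_AP (hpcrf D hD) l
    set TB : Set (Set (ℕ × ℕ)) := fB '' t with hTBdef
    have hbig : (Y \ ⋃₀ TB).Nonempty := by
      by_contra hempty
      rw [Set.not_nonempty_iff_eq_empty, Set.diff_eq_empty] at hempty
      exact not_crf_sUnion (htfin.image fB)
        (by rintro B ⟨u, hu, rfl⟩; exact hfB u) (hYcr.mono hempty)
    obtain ⟨x, hxY, hxbad⟩ := hbig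
    refine ⟨x, Set.mem_sInter.2 fun u hu => ?_⟩
    refine hsub u hu ⟨fun k hk => ?_, fun hxB => hxbad ⟨fB u, ⟨u, hu, rfl⟩, hxB⟩⟩
    exact Set.mem_iInter₂.1 (hxY k hk).2 u hu
  obtain ⟨u0, hu0⟩ := Ultrafilter.exists_le (Filter.generate G)
  have hu0G : ∀ v ∈ G, v ∈ u0 := fun v hv => hu0 (Filter.mem_generate_of_mem hv)
  set W : Set (Ultrafilter (ℕ × ℕ)) :=
    {q | (∀ B ∈ q, CRF B) ∧ ∀ k ≤ l, q.map (Tm k) = p} with hWdef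
  have hu0W : u0 ∈ W := by
    constructor
    · intro B hB
      by_contra hcr
      exact (Ultrafilter.compl_mem_iff_notMem.1
        (hu0G Bᶜ (Or.inr ⟨B, hcr, rfl⟩))) hB
    · intro k hk
      refine Ultrafilter.coe_inj.1 (p.unique fun A' hA' => ?_)
      exact hu0G (Tm k ⁻¹' A') (Or.inl ⟨k, hk, A', hA', rfl⟩)
  have hWclosed : IsClosed W := by
    have hWeq : W = (⋂ B ∈ {B : Set (ℕ × ℕ) | ¬ CRF B},
          {q : Ultrafilter (ℕ × ℕ) | Bᶜ ∈ q}) ∩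
        ⋂ k ∈ Set.Iic l, ⋂ A' ∈ {A' : Set ℕ | A' ∈ p},
          {q : Ultrafilter (ℕ × ℕ) | Tm k ⁻¹' A' ∈ q} := by
      ext q
      simp only [Set.mem_inter_iff, Set.mem_iInter, Set.mem_setOf_eq, Set.mem_Iic, hWdef]
      constructor
      · rintro ⟨h1, h2⟩
        refine ⟨fun B hB => Ultrafilter.compl_mem_iff_notMem.2
          (fun hBq => hB (h1 B hBq)), fun k hk A' hA' => ?_⟩
        rw [← h2 k hk] at hA'
        exact Ultrafilter.mem_map.1 hA'
      · rintro ⟨h1, h2⟩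
        refine ⟨fun B hB => ?_, fun k hk => ?_⟩
        · by_contra hcr
          exact (Ultrafilter.compl_mem_iff_notMem.1 (h1 B hcr)) hB
        · exact Ultrafilter.coe_inj.1 (p.unique fun A' hA' => h2 k hk A' hA')
    rw [hWeq]
    exact IsClosed.inter (isClosed_biInter fun B _ => ultrafilter_isClosed_basic _)
      (isClosed_biInter fun k _ => isClosed_biInter fun A' _ =>
        ultrafilter_isClosed_basic _)
  have hWadd : ∀ x ∈ W, ∀ y ∈ W, x + y ∈ W := by
    intro x hx y hy
    rw [← uadd_eq_add]
    refine ⟨fun B hB => crf_of_uadd y (hx.1 _ (mem_uadd.1 hB)), fun k hk => ?_⟩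
    rw [map_uadd (Tm k) (Tm_hom k) x y, hx.2 k hk, hy.2 k hk]
    exact hpp
  obtain ⟨q, hqW, hq⟩ := exists_idempotent_in_compact_add_subsemigroup
    (fun r => Ultrafilter.continuous_add_left r) W ⟨u0, hu0W⟩ hWclosed.isCompact hWadd
  refine ⟨q, by rw [uadd_eq_add]; exact hq,
    fun B hB => crSet_iff_crf.2 (hqW.1 B hB), ?_⟩
  have htar : {pab : ℕ × ℕ | ∀ k : ℕ, k ≤ l → pab.1 + k * pab.2 ∈ A} =
      ⋂ k ∈ Set.Iic l, Tm k ⁻¹' A := by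
    ext x
    simp [Tm, Set.mem_iInter]
  rw [htar]
  refine (Filter.biInter_mem (Set.finite_Iic l)).2 fun k hk => ?_
  have hAq : A ∈ q.map (Tm k) := (hqW.2 k hk).symm ▸ hpA
  exact Ultrafilter.mem_map.1 hAq

end APmain

/-- If `A ⊆ ℕ` is an essential CR-set and `l ∈ ℕ`, then
`{(a,b) : a, a+b, …, a+lb ∈ A}` is an essential CR-set in `(ℕ × ℕ, +)`. -/
theorem essentialCRSet_abundance_AP (A : Set ℕ) (hA : EssentialCRSet A)
    (l : ℕ) :
    EssentialCRSet {p : ℕ × ℕ | ∀ k : ℕ, k ≤ l → p.1 + k * p.2 ∈ A} := by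
  exact APmain.main A hA l
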